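/- Assume h ∘ h = 0, h(Y) = 0, and that v := −(1/2)·g₀(h(X₀), X₀) is nonzero. Then there exists a unique vector X₁ ∈ V such that h(z) = −2v · g₀(X₁, z) · X₁ for all z ∈ V and g₀(X₁, X₀) = 1. Moreover this X₁ satisfies g₀(X₁, X₁) = 0 (X₁ is lightlike for g₀) and g₀(X₁, Y) = 0; consequently g₀ + h = g₀ − 2v · X₁♭ ⊗ X₁♭. -/

import Mathlib

/-- Existence and uniqueness of the lightlike vector `X₁` with
`h = -2v X₁♭ ⊗ X₁♭` and `g₀(X₁, X₀) = 1`, for an index-2 nilpotent potential without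
electromagnetism; moreover `g₀(X₁, X₁) = 0` and `g₀(X₁, Y) = 0`. -/
theorem stmt3 {V : Type*} [AddCommGroup V] [Module ℝ V] [FiniteDimensional ℝ V]
    (g₀ : V →ₗ[ℝ] V →ₗ[ℝ] ℝ) (hg₀symm : ∀ u v : V, g₀ u v = g₀ v u)
    (h : V →ₗ[ℝ] V) (hsymm : ∀ u v : V, g₀ (h u) v = g₀ u (h v))
    (Y X₀ : V) (hYY : g₀ Y Y = -1) (hXX : g₀ X₀ X₀ = -1) (hYX : g₀ Y X₀ = 0)
    (hpos : ∀ w : V, w ≠ 0 → g₀ w Y = 0 → g₀ w X₀ = 0 → 0 < g₀ w w)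
    (hnil : h ∘ₗ h = 0) (hY0 : h Y = 0)
    (v : ℝ) (hv : v = -(1/2) * g₀ (h X₀) X₀) (hvne : v ≠ 0) :
    (∃! X₁ : V, (∀ z : V, h z = (-2 * v * g₀ X₁ z) • X₁) ∧ g₀ X₁ X₀ = 1) ∧
    (∀ X₁ : V, ((∀ z : V, h z = (-2 * v * g₀ X₁ z) • X₁) ∧ g₀ X₁ X₀ = 1) →
      g₀ X₁ X₁ = 0 ∧ g₀ X₁ Y = 0) := by
  have hX0 : g₀ (h X₀) X₀ = -2 * v := by rw [hv]; ring
  set c : ℝ := -(1 / (2 * v)) with hc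
  have hcv : c * (-2 * v) = 1 := by rw [hc]; field_simp
  set X₁ : V := c • h X₀ with hX₁def
  have hnorm : g₀ X₁ X₀ = 1 := by
    rw [hX₁def]; simp only [map_smul, LinearMap.smul_apply, smul_eq_mul, hX0]
    linarith [hcv]
  have key : ∀ z : V, h z = (-2 * v * g₀ X₁ z) • X₁ := by
    intro z
    set cz : ℝ := g₀ z (h X₀) * c with hcz
    have hw : h (z - cz • X₀) = 0 := by
      by_contra hw0
      have h1 : g₀ (h (z - cz • X₀)) Y = 0 := by
        rw [hsymm, hY0]; simp
      have h2 : g₀ (h (z - cz • X₀)) X₀ = 0 := by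
        simp only [map_sub, map_smul, LinearMap.sub_apply, LinearMap.smul_apply,
          smul_eq_mul, hX0, hsymm z X₀]
        rw [hcz]; linear_combination (-((g₀ z) (h X₀))) * hcv
      have h3 : g₀ (h (z - cz • X₀)) (h (z - cz • X₀)) = 0 := by
        rw [hsymm]
        have hz2 : h (h (z - cz • X₀)) = 0 := by
          have := LinearMap.ext_iff.mp hnil (z - cz • X₀)
          simpa using this
        rw [hz2]; simp
      have := hpos _ hw0 h1 h2
      linarith
    have hz : h z = cz • h X₀ := by
      have : h z - cz • h X₀ = 0 := by
        simpa [map_sub, map_smul] using hw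
      linear_combination (norm := module) this
    rw [hz, hX₁def]
    simp only [map_smul, LinearMap.smul_apply, smul_eq_mul, smul_smul]
    congr 1
    rw [hcz, hg₀symm (h X₀) z]
    linear_combination (-((g₀ z) (h X₀)) * c) * hcv
  refine ⟨⟨X₁, ⟨key, hnorm⟩, ?_⟩, ?_⟩
  · rintro X₁' ⟨hf', hn'⟩
    have e1 : h X₀ = (-2 * v) • X₁' := by
      rw [hf' X₀, hn']; ring_nf
    have e2 : h X₀ = (-2 * v) • X₁ := by
      rw [key X₀, hnorm]; ring_nf
    have : (-2 * v) • X₁' = (-2 * v) • X₁ := by rw [← e1, ← e2]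
    have hne : (-2 : ℝ) * v ≠ 0 := by
      intro hh; apply hvne; linarith [hh]
    exact smul_right_injective V hne this
  · rintro Z ⟨hf, hn⟩
    have h2v : (-2 : ℝ) * v ≠ 0 := by intro hh; apply hvne; linarith
    have hZY : g₀ Z Y = 0 := by
      have e : (0 : V) = (-2 * v * g₀ Z Y) • Z := by rw [← hf Y, hY0]
      have e2 := congrArg (fun w => g₀ w X₀) e
      simp only [map_smul, LinearMap.smul_apply, smul_eq_mul, hn, map_zero,
        LinearMap.zero_apply, mul_one] at e2
      have := mul_eq_zero.mp e2.symm
      rcases this with hh | hh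
      · exact absurd hh h2v
      · exact hh
    have hZZ : g₀ Z Z = 0 := by
      have e0 : h (h X₀) = 0 := by
        have := LinearMap.ext_iff.mp hnil X₀; simpa using this
      have e1 : h X₀ = (-2 * v) • Z := by rw [hf X₀, hn]; ring_nf
      have e2 : (0 : V) = ((-2 * v) * (-2 * v * g₀ Z Z)) • Z := by
        rw [← e0, e1, map_smul, hf Z, smul_smul]
      have e3 := congrArg (fun w => g₀ w X₀) e2
      simp only [map_smul, LinearMap.smul_apply, smul_eq_mul, hn, map_zero,
        LinearMap.zero_apply, mul_one] at e3
      rcases mul_eq_zero.mp e3.symm with hh | hh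
      · exact absurd hh h2v
      · rcases mul_eq_zero.mp hh with hh2 | hh2
        · exact absurd hh2 h2v
        · exact hh2
    exact ⟨hZZ, hZY⟩
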